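/- arXiv:2504.14383 — 2 statements merged into one kernel-verified Lean document; each statement's English description precedes it below -/
import Mathlib

section
/- In the graded-commutative F₂-algebra R = F₂[h₀, h₁, a, P]/(h₀h₁, h₁³, h₁a, a² + P h₀²) with |h₀| = (0,1), |h₁| = (1,1), |a| = (7,4), |P| = (8,4), the quotient ker(h₀)/im(h₁) is zero; that is, every element annihilated by multiplication by h₀ lies in the ideal generated by h₁. -/
open MvPolynomial

/-- The defining ideal of the cohomology of classical `A(1)`:
variables `X 0 = h₀`, `X 1 = h₁`, `X 2 = a`, `X 3 = P`. -/
noncomputable def A1Ideal : Ideal (MvPolynomial (Fin 4) (ZMod 2)) :=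
  Ideal.span {X 0 * X 1, (X 1) ^ 3, X 1 * X 2, (X 2) ^ 2 + X 3 * (X 0) ^ 2}

/-- The cohomology of classical `A(1)`:
`R = F₂[h₀,h₁,a,P]/(h₀h₁, h₁³, h₁a, a² + Ph₀²)`. -/
noncomputable abbrev A1Cohomology : Type :=
  MvPolynomial (Fin 4) (ZMod 2) ⧸ A1Ideal

/-- Killing one variable: `X t` divides `q - q|_{X t := 0}`. -/
lemma X_dvd_sub_aeval (t : Fin 4) (q : MvPolynomial (Fin 4) (ZMod 2)) :
    X t ∣ q - aeval (fun i : Fin 4 => if i = t then 0 else X i) q := by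
  induction q using MvPolynomial.induction_on with
  | C a => simp
  | add p q hp hq =>
      simpa [map_add, add_sub_add_comm] using dvd_add hp hq
  | mul_X p n hp =>
      by_cases h : n = t
      · subst h
        simp only [map_mul, aeval_X, if_true, mul_zero, sub_zero]
        exact dvd_mul_left _ _
      · simp only [map_mul, aeval_X, if_neg h]
        have : p * X n - aeval (fun i : Fin 4 => if i = t then 0 else X i) p * X n
            = (p - aeval (fun i : Fin 4 => if i = t then 0 else X i) p) * X n := by ring
        rw [this]
        exact Dvd.dvd.mul_right hp _

/-- In `R = F₂[h₀,h₁,a,P]/(h₀h₁, h₁³, h₁a, a² + Ph₀²)`, the quotient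
`ker(h₀)/im(h₁)` vanishes: every element annihilated by `h₀` is a multiple of `h₁`. -/
theorem ker_h0_eq_im_h1 (x : A1Cohomology)
    (hx : Ideal.Quotient.mk A1Ideal (X 0) * x = 0) :
    ∃ y : A1Cohomology, x = Ideal.Quotient.mk A1Ideal (X 1) * y := by
  obtain ⟨p, rfl⟩ := Ideal.Quotient.mk_surjective x
  rw [← map_mul, Ideal.Quotient.eq_zero_iff_mem] at hx
  set f : MvPolynomial (Fin 4) (ZMod 2) := (X 2) ^ 2 + X 3 * (X 0) ^ 2 with hf
  set σ₁ : MvPolynomial (Fin 4) (ZMod 2) →ₐ[ZMod 2] MvPolynomial (Fin 4) (ZMod 2) :=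
    aeval (fun i : Fin 4 => if i = 1 then 0 else X i) with hσ₁
  set σ₀ : MvPolynomial (Fin 4) (ZMod 2) →ₐ[ZMod 2] MvPolynomial (Fin 4) (ZMod 2) :=
    aeval (fun i : Fin 4 => if i = 0 then 0 else X i) with hσ₀
  have hσ₁f : σ₁ f = f := by simp [hσ₁, hf]
  have h1 : σ₁ (X 0 * p) ∈ Ideal.span {f} := by
    have hmem : σ₁ (X 0 * p) ∈ (A1Ideal.map σ₁.toRingHom) :=
      Ideal.mem_map_of_mem _ hx
    rw [A1Ideal, Ideal.map_span] at hmem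
    refine Ideal.span_le.mpr ?_ hmem
    intro z hz
    simp only [Set.image_insert_eq, Set.image_singleton, Set.mem_insert_iff,
      Set.mem_singleton_iff] at hz
    rcases hz with h | h | h | h <;> subst h
    · simp [hσ₁]
    · simp [hσ₁]
    · simp [hσ₁]
    · show σ₁ f ∈ _
      rw [hσ₁f]; exact Ideal.subset_span rfl
  rw [Ideal.mem_span_singleton] at h1
  obtain ⟨d, hd⟩ := h1
  rw [map_mul] at hd
  have hσ₁X0 : σ₁ (X 0) = X 0 := by simp [hσ₁]
  rw [hσ₁X0] at hd
  -- apply σ₀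
  have h2 : (0 : MvPolynomial (Fin 4) (ZMod 2)) = (X 2) ^ 2 * σ₀ d := by
    have := congrArg σ₀ hd
    simpa [hσ₀, hf, map_mul] using this
  have hd0 : σ₀ d = 0 := by
    rcases mul_eq_zero.mp h2.symm with h | h
    · exact absurd h (pow_ne_zero _ (X_ne_zero 2))
    · exact h
  obtain ⟨e, he⟩ : X 0 ∣ d := by
    have := X_dvd_sub_aeval 0 d
    rwa [show aeval (fun i : Fin 4 => if i = 0 then 0 else X i) d = σ₀ d from rfl,
      hd0, sub_zero] at this
  have h3 : σ₁ p = f * e := by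
    apply mul_left_cancel₀ (X_ne_zero (R := ZMod 2) 0)
    rw [hd, he]; ring
  obtain ⟨g, hg⟩ : X 1 ∣ p - σ₁ p := X_dvd_sub_aeval 1 p
  have hp : p = X 1 * g + f * e := by
    rw [← h3, ← hg]; ring
  refine ⟨Ideal.Quotient.mk A1Ideal g, ?_⟩
  have hfmem : f ∈ A1Ideal := Ideal.subset_span (by simp [hf])
  rw [hp, map_add, map_mul, map_mul, Ideal.Quotient.eq_zero_iff_mem.mpr hfmem,
    zero_mul, add_zero]
end

section
/- In the E₂-page of the Burklund–Xu spectral sequence for ℂ-motivic A(2) in Chow degree one, described as q₀·coker(h₀) ⊕ q₁·(ker h₀/im h₁) ⊕ q₂·ker(h₁) over R = F₂[h₀,h₁,a,P]/(h₀h₁, h₁³, h₁a, a²+Ph₀²), the middle summand vanishes and the outer summands are q₀·F₂[h₁,a,P]/(h₁³,h₁a,a²) and q₂·(h₀·F₂[h₀,P] ⊕ h₁²·F₂[P] ⊕ a·F₂[h₀,P]). -/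
open MvPolynomial

noncomputable def h₀ : A1Cohomology := Ideal.Quotient.mk A1Ideal (X 0)
noncomputable def h₁ : A1Cohomology := Ideal.Quotient.mk A1Ideal (X 1)
noncomputable def aElem : A1Cohomology := Ideal.Quotient.mk A1Ideal (X 2)
noncomputable def PElem : A1Cohomology := Ideal.Quotient.mk A1Ideal (X 3)

/-- The target ring `F₂[h₁,a,P]/(h₁³, h₁a, a²)`: variables `X 0 = h₁`, `X 1 = a`,
`X 2 = P`. -/
noncomputable def cokerIdeal : Ideal (MvPolynomial (Fin 3) (ZMod 2)) :=
  Ideal.span {(X 0) ^ 3, X 0 * X 1, (X 1) ^ 2}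

namespace BX

abbrev F2 := ZMod 2
abbrev A4 := MvPolynomial (Fin 4) F2

noncomputable def emb2 : MvPolynomial (Fin 2) F2 →ₐ[F2] A4 := aeval ![X 0, X 3]
noncomputable def embP : Polynomial F2 →ₐ[F2] A4 := Polynomial.aeval (X 3)
noncomputable def π2 : MvPolynomial (Fin 2) F2 →ₐ[F2] Polynomial F2 :=
  aeval ![0, Polynomial.X]
noncomputable def σP : Polynomial F2 →ₐ[F2] MvPolynomial (Fin 2) F2 :=
  Polynomial.aeval (X 1)

lemma mem1 : (X 0 * X 1 : A4) ∈ A1Ideal := Ideal.subset_span (by simp)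
lemma mem2 : ((X 1)^3 : A4) ∈ A1Ideal := Ideal.subset_span (by simp)
lemma mem3 : (X 1 * X 2 : A4) ∈ A1Ideal := Ideal.subset_span (by simp)
lemma mem4 : ((X 2)^2 + X 3 * (X 0)^2 : A4) ∈ A1Ideal := Ideal.subset_span (by simp)

lemma emb2_sigma (q : Polynomial F2) : emb2 (σP q) = embP q := by
  have h : (X 3 : A4) = emb2 (X 1) := by simp [emb2]
  rw [embP, σP, h, Polynomial.aeval_algHom_apply]

lemma pi_sigma (q : Polynomial F2) : π2 (σP q) = q := by
  have h : π2 (X 1) = Polynomial.X := by simp [π2]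
  rw [σP, ← Polynomial.aeval_algHom_apply, h, Polynomial.aeval_X_left_apply]

lemma emb2_X0 : emb2 (X 0) = (X 0 : A4) := by simp [emb2]
lemma emb2_X1 : emb2 (X 1) = (X 3 : A4) := by simp [emb2]

/-- `r - σ(π r)` is divisible by `X 0` in `F₂[h₀,P]`. -/
lemma sub_sigma_pi_mem (r : MvPolynomial (Fin 2) F2) :
    r - σP (π2 r) ∈ Ideal.span {(X 0 : MvPolynomial (Fin 2) F2)} := by
  induction r using MvPolynomial.induction_on with
  | C a =>
    have : σP (π2 (C a)) = C a := by
      simp [π2, σP, MvPolynomial.aeval_C, Polynomial.aeval_C, MvPolynomial.algebraMap_eq]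
    rw [this, sub_self]; exact Ideal.zero_mem _
  | add p q hp hq => simpa [add_sub_add_comm] using Ideal.add_mem _ hp hq
  | mul_X p i hp =>
    fin_cases i
    · show p * X 0 - σP (π2 (p * X 0)) ∈ _
      have h : π2 (p * X 0) = 0 := by simp [π2]
      rw [h, map_zero, sub_zero]
      exact Ideal.mul_mem_left _ _ (Ideal.subset_span (by simp))
    · show p * X 1 - σP (π2 (p * X 1)) ∈ _
      have h : σP (π2 (p * X 1)) = σP (π2 p) * X 1 := by simp [π2, σP]
      rw [h, ← sub_mul]
      exact Ideal.mul_mem_right _ _ hp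

noncomputable def NF (r₀ r₁ : MvPolynomial (Fin 2) F2) (c₀ c₁ : Polynomial F2) : A4 :=
  emb2 r₀ + X 2 * emb2 r₁ + X 1 * embP c₀ + X 1 ^ 2 * embP c₁

lemma normal_form (p : A4) :
    ∃ r₀ r₁ c₀ c₁, p - NF r₀ r₁ c₀ c₁ ∈ A1Ideal := by
  induction p using MvPolynomial.induction_on with
  | C a =>
    refine ⟨C a, 0, 0, 0, ?_⟩
    have : emb2 (C a) = C a := by
      simp [emb2, MvPolynomial.aeval_C, MvPolynomial.algebraMap_eq]
    simp only [NF, this, map_zero, mul_zero, add_zero, sub_self]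
    exact Ideal.zero_mem _
  | add p q hp hq =>
    obtain ⟨r₀, r₁, c₀, c₁, hp⟩ := hp
    obtain ⟨s₀, s₁, d₀, d₁, hq⟩ := hq
    refine ⟨r₀ + s₀, r₁ + s₁, c₀ + d₀, c₁ + d₁, ?_⟩
    have : p + q - NF (r₀ + s₀) (r₁ + s₁) (c₀ + d₀) (c₁ + d₁)
        = (p - NF r₀ r₁ c₀ c₁) + (q - NF s₀ s₁ d₀ d₁) := by
      simp only [NF, map_add]; ring
    rw [this]; exact Ideal.add_mem _ hp hq
  | mul_X p i hp =>
    obtain ⟨r₀, r₁, c₀, c₁, hp⟩ := hp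
    fin_cases i
    · -- multiply by h₀ = X 0
      show ∃ r₀ r₁ c₀ c₁, p * X 0 - NF r₀ r₁ c₀ c₁ ∈ A1Ideal
      refine ⟨X 0 * r₀, X 0 * r₁, 0, 0, ?_⟩
      have key : p * X 0 - NF (X 0 * r₀) (X 0 * r₁) 0 0
          = (p - NF r₀ r₁ c₀ c₁) * X 0
            + (X 0 * X 1) * (embP c₀ + X 1 * embP c₁) := by
        simp only [NF, map_mul, map_zero, emb2_X0, mul_zero, add_zero]
        ring
      rw [key]
      exact Ideal.add_mem _ (Ideal.mul_mem_right _ _ hp) (Ideal.mul_mem_right _ _ mem1)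
    · -- multiply by h₁ = X 1
      show ∃ r₀ r₁ c₀ c₁, p * X 1 - NF r₀ r₁ c₀ c₁ ∈ A1Ideal
      refine ⟨0, 0, π2 r₀, c₀, ?_⟩
      have key : p * X 1 - NF 0 0 (π2 r₀) c₀
          = (p - NF r₀ r₁ c₀ c₁) * X 1
            + X 1 * emb2 (r₀ - σP (π2 r₀)) + (X 1 * X 2) * emb2 r₁
            + (X 1)^3 * embP c₁ := by
        simp only [NF, map_sub, emb2_sigma, map_zero, mul_zero, zero_add, add_zero]
        ring
      rw [key]
      have hr := sub_sigma_pi_mem r₀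
      rw [Ideal.mem_span_singleton] at hr
      obtain ⟨f, hf⟩ := hr
      have hmem : X 1 * emb2 (r₀ - σP (π2 r₀)) ∈ A1Ideal := by
        rw [hf, map_mul, emb2_X0, show (X 1 : A4) * (X 0 * emb2 f) = (X 0 * X 1) * emb2 f by ring]
        exact Ideal.mul_mem_right _ _ mem1
      refine Ideal.add_mem _ (Ideal.add_mem _ (Ideal.add_mem _
        (Ideal.mul_mem_right _ _ hp) hmem)
        (Ideal.mul_mem_right _ _ mem3)) (Ideal.mul_mem_right _ _ mem2)
    · -- multiply by a = X 2
      show ∃ r₀ r₁ c₀ c₁, p * X 2 - NF r₀ r₁ c₀ c₁ ∈ A1Ideal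
      refine ⟨X 1 * (X 0)^2 * r₁, r₀, 0, 0, ?_⟩
      have key : p * X 2 - NF (X 1 * (X 0)^2 * r₁) r₀ 0 0
          = (p - NF r₀ r₁ c₀ c₁) * X 2
            + ((X 2)^2 - X 3 * (X 0)^2) * emb2 r₁
            + (X 1 * X 2) * embP c₀ + (X 1 * X 2) * (X 1 * embP c₁) := by
        simp only [NF, map_mul, map_pow, map_zero, emb2_X0, emb2_X1, mul_zero, add_zero]
        ring
      rw [key, show ((X 2:A4)^2 - X 3 * (X 0)^2) = (X 2)^2 + X 3 * (X 0)^2 from CharTwo.sub_eq_add _ _]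
      refine Ideal.add_mem _ (Ideal.add_mem _ (Ideal.add_mem _
        (Ideal.mul_mem_right _ _ hp) (Ideal.mul_mem_right _ _ mem4))
        (Ideal.mul_mem_right _ _ mem3)) (Ideal.mul_mem_right _ _ mem3)
    · -- multiply by P = X 3
      show ∃ r₀ r₁ c₀ c₁, p * X 3 - NF r₀ r₁ c₀ c₁ ∈ A1Ideal
      refine ⟨X 1 * r₀, X 1 * r₁, Polynomial.X * c₀, Polynomial.X * c₁, ?_⟩
      have hX : embP Polynomial.X = (X 3 : A4) := by simp [embP]
      have key : p * X 3 - NF (X 1 * r₀) (X 1 * r₁) (Polynomial.X * c₀) (Polynomial.X * c₁)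
          = (p - NF r₀ r₁ c₀ c₁) * X 3 := by
        simp only [NF, map_mul, emb2_X1, hX]
        ring
      rw [key]
      exact Ideal.mul_mem_right _ _ hp

end BX

namespace BX

noncomputable def φ₁ : A4 →ₐ[F2] Polynomial (MvPolynomial (Fin 2) F2) :=
  aeval ![Polynomial.C (X 0), 0, Polynomial.X, Polynomial.C (X 1)]

noncomputable def mT : Polynomial (MvPolynomial (Fin 2) F2) :=
  Polynomial.X ^ 2 + Polynomial.C (X 1 * (X 0)^2)

lemma φ₁_ideal {p : A4} (hp : p ∈ A1Ideal) : φ₁ p ∈ Ideal.span {mT} := by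
  have : A1Ideal ≤ Ideal.comap φ₁.toRingHom (Ideal.span {mT}) := by
    rw [A1Ideal, Ideal.span_le]
    rintro x (rfl | rfl | rfl | rfl)
    · simp [Ideal.mem_comap, φ₁]
    · simp [Ideal.mem_comap, φ₁]
    · simp [Ideal.mem_comap, φ₁]
    · simp only [SetLike.mem_coe, Ideal.mem_comap]
      have h4 : φ₁.toRingHom ((X 2)^2 + X 3 * (X 0)^2) = mT := by
        simp [φ₁, mT, map_pow, map_mul]
      rw [h4]; exact Ideal.subset_span rfl
  exact this hp

lemma φ₁_emb2 (s : MvPolynomial (Fin 2) F2) : φ₁ (emb2 s) = Polynomial.C s := by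
  have h1 : φ₁ (emb2 s) = aeval ![Polynomial.C (X 0), Polynomial.C (X 1)] s := by
    have hfun : (fun i => φ₁ (![X 0, X 3] i))
        = ![Polynomial.C (X 0), Polynomial.C (X 1)] := by
      funext i; fin_cases i <;> simp [φ₁]
    have := congrArg (fun ψ => ψ s) (comp_aeval (R := F2) ![X 0, X 3] φ₁)
    simp only [AlgHom.comp_apply] at this
    rw [emb2, this, hfun]
  have h2 : aeval ![Polynomial.C (X 0), Polynomial.C (X 1)] s
      = (Polynomial.CAlgHom (R := F2)) s := by
    have hfun : (fun i => (Polynomial.CAlgHom (R := F2)) (X (R := F2) i))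
        = ![Polynomial.C (X 0), Polynomial.C (X 1)] := by
      funext i; fin_cases i <;> simp [Polynomial.CAlgHom]
    have := congrArg (fun ψ => ψ s)
      (comp_aeval (R := F2) (X : Fin 2 → MvPolynomial (Fin 2) F2)
        (Polynomial.CAlgHom (R := F2)))
    simp only [AlgHom.comp_apply, aeval_X_left_apply] at this
    rw [hfun] at this
    exact this.symm
  rw [h1, h2]; rfl

lemma D1 (s₀ s₁ : MvPolynomial (Fin 2) F2)
    (h : emb2 s₀ + X 2 * emb2 s₁ ∈ A1Ideal) : s₀ = 0 ∧ s₁ = 0 := by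
  have himg := φ₁_ideal h
  have heq : φ₁ (emb2 s₀ + X 2 * emb2 s₁)
      = Polynomial.C s₀ + Polynomial.X * Polynomial.C s₁ := by
    rw [map_add, map_mul, φ₁_emb2, φ₁_emb2]
    congr 1
    simp [φ₁]
  rw [heq, Ideal.mem_span_singleton] at himg
  have hz : Polynomial.C s₀ + Polynomial.X * Polynomial.C s₁ = 0 := by
    refine Polynomial.eq_zero_of_dvd_of_degree_lt himg ?_
    have hm : mT.degree = 2 := Polynomial.degree_X_pow_add_C (by norm_num) _
    have : (Polynomial.C s₀ + Polynomial.X * Polynomial.C s₁).degree ≤ 1 := by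
      refine le_trans (Polynomial.degree_add_le _ _) (max_le ?_ ?_)
      · exact le_trans Polynomial.degree_C_le (by norm_num)
      · refine le_trans (Polynomial.degree_mul_le _ _) ?_
        calc Polynomial.X.degree + (Polynomial.C s₁).degree
            ≤ 1 + 0 := add_le_add Polynomial.degree_X_le Polynomial.degree_C_le
          _ = 1 := by norm_num
    rw [hm]
    exact lt_of_le_of_lt this (by norm_num)
  constructor
  · have := congrArg (fun q => Polynomial.coeff q 0) hz
    simpa using this
  · have := congrArg (fun q => Polynomial.coeff q 1) hz
    simpa using this

end BX

namespace BX

noncomputable def φ₂ : A4 →ₐ[F2] Polynomial (Polynomial F2) :=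
  aeval ![0, Polynomial.X, 0, Polynomial.C Polynomial.X]

lemma φ₂_ideal {p : A4} (hp : p ∈ A1Ideal) :
    φ₂ p ∈ Ideal.span {(Polynomial.X : Polynomial (Polynomial F2)) ^ 3} := by
  have : A1Ideal ≤ Ideal.comap φ₂.toRingHom
      (Ideal.span {(Polynomial.X : Polynomial (Polynomial F2)) ^ 3}) := by
    rw [A1Ideal, Ideal.span_le]
    rintro x (rfl | rfl | rfl | rfl)
    · simp [Ideal.mem_comap, φ₂]
    · simp only [SetLike.mem_coe, Ideal.mem_comap]
      have h2 : φ₂.toRingHom ((X 1)^3) = Polynomial.X ^ 3 := by simp [φ₂]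
      rw [h2]; exact Ideal.subset_span rfl
    · simp [Ideal.mem_comap, φ₂]
    · simp [Ideal.mem_comap, φ₂]
  exact this hp

lemma φ₂_embP (c : Polynomial F2) : φ₂ (embP c) = Polynomial.C c := by
  have h1 : φ₂ (X 3 : A4) = (Polynomial.CAlgHom (R := F2)) Polynomial.X := by
    simp [φ₂, Polynomial.CAlgHom]
  rw [embP, ← Polynomial.aeval_algHom_apply, h1,
    Polynomial.aeval_algHom_apply, Polynomial.aeval_X_left_apply]
  rfl

lemma D2 (c₀ c₁ : Polynomial F2)
    (h : X 1 * embP c₀ + X 1 ^ 2 * embP c₁ ∈ A1Ideal) : c₀ = 0 ∧ c₁ = 0 := by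
  have himg := φ₂_ideal h
  have heq : φ₂ (X 1 * embP c₀ + X 1 ^ 2 * embP c₁)
      = Polynomial.X * Polynomial.C c₀ + Polynomial.X ^ 2 * Polynomial.C c₁ := by
    rw [map_add, map_mul, map_mul, map_pow, φ₂_embP, φ₂_embP]
    have : φ₂ (X 1) = Polynomial.X := by simp [φ₂]
    rw [this]
  rw [heq, Ideal.mem_span_singleton] at himg
  have hz : Polynomial.X * Polynomial.C c₀ + Polynomial.X ^ 2 * Polynomial.C c₁ = 0 := by
    refine Polynomial.eq_zero_of_dvd_of_degree_lt himg ?_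
    have hm : ((Polynomial.X : Polynomial (Polynomial F2)) ^ 3).degree = 3 := by
      simpa using Polynomial.degree_X_pow 3
    have hle : (Polynomial.X * Polynomial.C c₀
        + Polynomial.X ^ 2 * Polynomial.C c₁).degree ≤ 2 := by
      refine le_trans (Polynomial.degree_add_le _ _) (max_le ?_ ?_)
      · refine le_trans (Polynomial.degree_mul_le _ _) ?_
        calc Polynomial.X.degree + (Polynomial.C c₀).degree
            ≤ 1 + 0 := add_le_add Polynomial.degree_X_le Polynomial.degree_C_le
          _ ≤ 2 := by norm_num
      · refine le_trans (Polynomial.degree_mul_le _ _) ?_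
        calc (Polynomial.X ^ 2).degree + (Polynomial.C c₁).degree
            ≤ 2 + 0 := add_le_add (Polynomial.degree_X_pow_le 2) Polynomial.degree_C_le
          _ ≤ 2 := by norm_num
    rw [hm]
    exact lt_of_le_of_lt hle (by norm_num)
  constructor
  · have := congrArg (fun q => Polynomial.coeff q 1) hz
    simp [Polynomial.coeff_X_mul] at this
    exact this
  · have := congrArg (fun q => Polynomial.coeff q 2) hz
    simpa [Polynomial.coeff_X_mul, pow_two, mul_assoc] using this

/-- key lemma for part (ii): h₀-torsion is a multiple of h₁, at polynomial level -/
lemma ker_h0 (p : A4) (hp : X 0 * p ∈ A1Ideal) :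
    ∃ q : A4, p - X 1 * q ∈ A1Ideal := by
  obtain ⟨r₀, r₁, c₀, c₁, hnf⟩ := normal_form p
  have h1 : X 0 * p - (emb2 (X 0 * r₀) + X 2 * emb2 (X 0 * r₁)) ∈ A1Ideal := by
    have key : X 0 * p - (emb2 (X 0 * r₀) + X 2 * emb2 (X 0 * r₁))
        = X 0 * (p - NF r₀ r₁ c₀ c₁) + (X 0 * X 1) * (embP c₀ + X 1 * embP c₁) := by
      simp only [NF, map_mul, emb2_X0]; ring
    rw [key]
    exact Ideal.add_mem _ (Ideal.mul_mem_left _ _ hnf) (Ideal.mul_mem_right _ _ mem1)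
  have h2 : emb2 (X 0 * r₀) + X 2 * emb2 (X 0 * r₁) ∈ A1Ideal := by
    have : emb2 (X 0 * r₀) + X 2 * emb2 (X 0 * r₁)
        = X 0 * p - (X 0 * p - (emb2 (X 0 * r₀) + X 2 * emb2 (X 0 * r₁))) := by ring
    rw [this]
    exact Ideal.sub_mem _ hp h1
  obtain ⟨e₀, e₁⟩ := D1 _ _ h2
  have hr₀ : r₀ = 0 := by
    have := mul_eq_zero.mp e₀
    rcases this with h | h
    · exact absurd h (MvPolynomial.X_ne_zero 0)
    · exact h
  have hr₁ : r₁ = 0 := by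
    rcases mul_eq_zero.mp e₁ with h | h
    · exact absurd h (MvPolynomial.X_ne_zero 0)
    · exact h
  refine ⟨embP c₀ + X 1 * embP c₁, ?_⟩
  have : p - X 1 * (embP c₀ + X 1 * embP c₁) = p - NF r₀ r₁ c₀ c₁ := by
    rw [hr₀, hr₁]
    simp only [NF, map_zero, mul_zero, zero_add]
    ring
  rw [this]; exact hnf

/-- key lemma for part (iii), forward direction, at polynomial level -/
lemma ker_h1 (p : A4) (hp : X 1 * p ∈ A1Ideal) :
    ∃ (f g : MvPolynomial (Fin 2) F2) (u : Polynomial F2),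
      p - (X 0 * emb2 f + X 1 ^ 2 * embP u + X 2 * emb2 g) ∈ A1Ideal := by
  obtain ⟨r₀, r₁, c₀, c₁, hnf⟩ := normal_form p
  obtain ⟨f', hf'⟩ := Ideal.mem_span_singleton.mp (sub_sigma_pi_mem r₀)
  have h1 : X 1 * p - (X 1 * embP (π2 r₀) + X 1 ^ 2 * embP c₀) ∈ A1Ideal := by
    have key : X 1 * p - (X 1 * embP (π2 r₀) + X 1 ^ 2 * embP c₀)
        = X 1 * (p - NF r₀ r₁ c₀ c₁)
          + X 1 * emb2 (r₀ - σP (π2 r₀)) + (X 1 * X 2) * emb2 r₁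
          + (X 1)^3 * embP c₁ := by
      simp only [NF, map_sub, emb2_sigma]; ring
    rw [key]
    have hmem : X 1 * emb2 (r₀ - σP (π2 r₀)) ∈ A1Ideal := by
      rw [hf', map_mul, emb2_X0,
        show (X 1 : A4) * (X 0 * emb2 f') = (X 0 * X 1) * emb2 f' by ring]
      exact Ideal.mul_mem_right _ _ mem1
    exact Ideal.add_mem _ (Ideal.add_mem _ (Ideal.add_mem _
      (Ideal.mul_mem_left _ _ hnf) hmem) (Ideal.mul_mem_right _ _ mem3))
      (Ideal.mul_mem_right _ _ mem2)
  have h2 : X 1 * embP (π2 r₀) + X 1 ^ 2 * embP c₀ ∈ A1Ideal := by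
    have : X 1 * embP (π2 r₀) + X 1 ^ 2 * embP c₀
        = X 1 * p - (X 1 * p - (X 1 * embP (π2 r₀) + X 1 ^ 2 * embP c₀)) := by ring
    rw [this]; exact Ideal.sub_mem _ hp h1
  obtain ⟨e₀, e₁⟩ := D2 _ _ h2
  have hr₀ : r₀ = X 0 * f' := by
    have := hf'
    rw [e₀, map_zero, sub_zero] at this
    exact this
  refine ⟨f', r₁, c₁, ?_⟩
  have : p - (X 0 * emb2 f' + X 1 ^ 2 * embP c₁ + X 2 * emb2 r₁)
      = p - NF r₀ r₁ c₀ c₁ := by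
    rw [hr₀, e₁]
    simp only [NF, map_mul, emb2_X0, map_zero, mul_zero, add_zero]
    ring
  rw [this]; exact hnf

end BX

namespace BX

noncomputable def mkI : A4 →ₐ[F2] A1Cohomology := Ideal.Quotient.mkₐ F2 A1Ideal

lemma mkI_apply (p : A4) : mkI p = Ideal.Quotient.mk A1Ideal p := rfl

lemma mk_emb2 (f : MvPolynomial (Fin 2) F2) :
    Ideal.Quotient.mk A1Ideal (emb2 f) = aeval ![h₀, PElem] f := by
  have hfun : (fun i => mkI (![X 0, X 3] i)) = ![h₀, PElem] := by
    funext i; fin_cases i <;> rfl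
  have := congrArg (fun ψ => ψ f) (comp_aeval (R := F2) ![X 0, X 3] mkI)
  simp only [AlgHom.comp_apply] at this
  rw [← mkI_apply, emb2, this, hfun]

lemma mk_embP (u : Polynomial F2) :
    Ideal.Quotient.mk A1Ideal (embP u) = Polynomial.aeval PElem u := by
  rw [← mkI_apply, embP, ← Polynomial.aeval_algHom_apply]
  rfl

lemma rel1 : h₀ * h₁ = 0 := by
  rw [h₀, h₁, ← map_mul, Ideal.Quotient.eq_zero_iff_mem]; exact mem1
lemma rel2 : h₁ ^ 3 = 0 := by
  rw [h₁, ← map_pow, Ideal.Quotient.eq_zero_iff_mem]; exact mem2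
lemma rel3 : h₁ * aElem = 0 := by
  rw [h₁, aElem, ← map_mul, Ideal.Quotient.eq_zero_iff_mem]; exact mem3

/-- part (ii) -/
lemma part2 (x : A1Cohomology) (hx : h₀ * x = 0) : ∃ y, x = h₁ * y := by
  obtain ⟨p, rfl⟩ := Ideal.Quotient.mk_surjective x
  rw [h₀, ← map_mul, Ideal.Quotient.eq_zero_iff_mem] at hx
  obtain ⟨q, hq⟩ := ker_h0 p hx
  refine ⟨Ideal.Quotient.mk A1Ideal q, ?_⟩
  rw [h₁, ← map_mul]
  exact Ideal.Quotient.eq.mpr hq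

/-- part (iii) -/
lemma part3 (x : A1Cohomology) :
    h₁ * x = 0 ↔
      ∃ (f g : MvPolynomial (Fin 2) F2) (u : Polynomial F2),
        x = h₀ * (aeval ![h₀, PElem] f)
          + h₁ ^ 2 * (Polynomial.aeval PElem u)
          + aElem * (aeval ![h₀, PElem] g) := by
  constructor
  · intro hx
    obtain ⟨p, rfl⟩ := Ideal.Quotient.mk_surjective x
    rw [h₁, ← map_mul, Ideal.Quotient.eq_zero_iff_mem] at hx
    obtain ⟨f, g, u, hfgu⟩ := ker_h1 p hx
    refine ⟨f, g, u, ?_⟩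
    have := Ideal.Quotient.eq.mpr hfgu
    rw [this, map_add, map_add, map_mul, map_mul, map_mul, map_pow,
      mk_emb2, mk_emb2, mk_embP]
    rfl
  · rintro ⟨f, g, u, rfl⟩
    have key : h₁ * (h₀ * (aeval ![h₀, PElem] f)
          + h₁ ^ 2 * (Polynomial.aeval PElem u)
          + aElem * (aeval ![h₀, PElem] g))
        = (h₀ * h₁) * (aeval ![h₀, PElem] f)
          + h₁ ^ 3 * (Polynomial.aeval PElem u)
          + (h₁ * aElem) * (aeval ![h₀, PElem] g) := by ring
    rw [key, rel1, rel2, rel3]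
    ring

/-! ### Part (i): the isomorphism -/

set_option maxHeartbeats 1000000
set_option synthInstance.maxHeartbeats 1000000

abbrev Rq := A1Cohomology ⧸ Ideal.span {h₀}
abbrev B3q := MvPolynomial (Fin 3) F2 ⧸ cokerIdeal

lemma memJ1 : ((X 0)^3 : MvPolynomial (Fin 3) F2) ∈ cokerIdeal := Ideal.subset_span (by simp)
lemma memJ2 : (X 0 * X 1 : MvPolynomial (Fin 3) F2) ∈ cokerIdeal := Ideal.subset_span (by simp)
lemma memJ3 : ((X 1)^2 : MvPolynomial (Fin 3) F2) ∈ cokerIdeal := Ideal.subset_span (by simp)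

noncomputable def F0 : A4 →ₐ[F2] B3q :=
  (Ideal.Quotient.mkₐ F2 cokerIdeal).comp (aeval ![0, X 0, X 1, X 2])

lemma F0_vanish : ∀ a ∈ A1Ideal, F0 a = 0 := by
  have hle : A1Ideal ≤ RingHom.ker F0.toRingHom := by
    rw [A1Ideal, Ideal.span_le]
    rintro x (rfl | rfl | rfl | rfl) <;>
    simp only [SetLike.mem_coe, RingHom.mem_ker, AlgHom.toRingHom_eq_coe,
        RingHom.coe_coe] <;>
      show F0 _ = 0
    · simp [F0]
    · have : F0 ((X 1)^3) = Ideal.Quotient.mk cokerIdeal ((X 0)^3) := by simp [F0]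
      rw [this, Ideal.Quotient.eq_zero_iff_mem]; exact memJ1
    · have : F0 (X 1 * X 2) = Ideal.Quotient.mk cokerIdeal (X 0 * X 1) := by simp [F0]
      rw [this, Ideal.Quotient.eq_zero_iff_mem]; exact memJ2
    · have : F0 ((X 2)^2 + X 3 * (X 0)^2) = Ideal.Quotient.mk cokerIdeal ((X 1)^2) := by
        simp [F0]
      rw [this, Ideal.Quotient.eq_zero_iff_mem]; exact memJ3
  intro a ha
  simpa using hle ha

noncomputable def F1 : A1Cohomology →ₐ[F2] B3q :=
  Ideal.Quotient.liftₐ A1Ideal F0 F0_vanish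

lemma F1_mk (p : A4) : F1 (Ideal.Quotient.mk A1Ideal p) = F0 p := by
  rw [F1, Ideal.Quotient.liftₐ_apply]
  rfl

lemma F1_h₀ : F1 h₀ = 0 := by
  rw [h₀, F1_mk]
  simp [F0]

noncomputable def F2' : Rq →ₐ[F2] B3q :=
  Ideal.Quotient.liftₐ (Ideal.span {h₀}) F1 (by
    intro a ha
    rw [Ideal.mem_span_singleton] at ha
    obtain ⟨c, rfl⟩ := ha
    rw [map_mul, F1_h₀, zero_mul])

noncomputable def Q : A4 →ₐ[F2] Rq :=
  (Ideal.Quotient.mkₐ F2 (Ideal.span {h₀})).comp mkI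

lemma Q_A1 {p : A4} (hp : p ∈ A1Ideal) : Q p = 0 := by
  simp only [Q, AlgHom.comp_apply, mkI_apply]
  rw [Ideal.Quotient.eq_zero_iff_mem.mpr hp, map_zero]

lemma Q_X0 : Q (X 0) = 0 := by
  simp only [Q, AlgHom.comp_apply, mkI_apply]
  rw [Ideal.Quotient.mkₐ_eq_mk, Ideal.Quotient.eq_zero_iff_mem]
  exact Ideal.subset_span rfl

noncomputable def G0 : MvPolynomial (Fin 3) F2 →ₐ[F2] Rq :=
  aeval ![Q (X 1), Q (X 2), Q (X 3)]

lemma G0_vanish : ∀ a ∈ cokerIdeal, G0 a = 0 := by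
  have hle : cokerIdeal ≤ RingHom.ker G0.toRingHom := by
    rw [cokerIdeal, Ideal.span_le]
    rintro x (rfl | rfl | rfl) <;>
    simp only [SetLike.mem_coe, RingHom.mem_ker, AlgHom.toRingHom_eq_coe,
        RingHom.coe_coe] <;>
      show G0 _ = 0
    · have : G0 ((X 0)^3) = Q ((X 1)^3) := by simp [G0]
      rw [this, Q_A1 mem2]
    · have : G0 (X 0 * X 1) = Q (X 1 * X 2) := by simp [G0]
      rw [this, Q_A1 mem3]
    · have h2 : G0 ((X 1)^2) = Q ((X 2)^2) := by simp [G0]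
      have h3 : Q ((X 2)^2) = Q ((X 2)^2 + X 3 * (X 0)^2) + Q (X 3) * Q (X 0)^2 := by
        simp only [map_add, map_mul, map_pow]
        have : Q (X 3) * Q (X 0)^2 + Q (X 3) * Q (X 0)^2 = 0 := by
          rw [Q_X0]; ring
        rw [add_assoc, this, add_zero]
      rw [h2, h3, Q_A1 mem4, Q_X0]
      ring
  intro a ha
  simpa using hle ha

noncomputable def G1 : B3q →ₐ[F2] Rq :=
  Ideal.Quotient.liftₐ cokerIdeal G0 G0_vanish

lemma G1_mk (p : MvPolynomial (Fin 3) F2) :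
    G1 (Ideal.Quotient.mk cokerIdeal p) = G0 p := by
  rw [G1, Ideal.Quotient.liftₐ_apply]
  rfl

lemma F2'_Q (p : A4) : F2' (Q p) = F0 p := by
  simp only [Q, AlgHom.comp_apply, mkI_apply]
  rw [F2', Ideal.Quotient.mkₐ_eq_mk, Ideal.Quotient.liftₐ_apply]
  exact F1_mk p

noncomputable def partI : Rq ≃ₐ[F2] B3q := by
  refine AlgEquiv.ofAlgHom F2' G1 ?_ ?_
  · refine Ideal.Quotient.algHom_ext _ (MvPolynomial.algHom_ext fun i => ?_)
    simp only [AlgHom.comp_apply, Ideal.Quotient.mkₐ_eq_mk, AlgHom.id_apply]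
    rw [G1_mk]
    fin_cases i
    · show F2' (G0 (X 0)) = Ideal.Quotient.mk cokerIdeal (X 0)
      have h1 : G0 (X 0) = Q (X 1) := by simp [G0]
      have h2 : F0 (X 1 : A4) = Ideal.Quotient.mk cokerIdeal (X 0) := by simp [F0]
      rw [h1, F2'_Q, h2]
    · show F2' (G0 (X 1)) = Ideal.Quotient.mk cokerIdeal (X 1)
      have h1 : G0 (X 1) = Q (X 2) := by simp [G0]
      have h2 : F0 (X 2 : A4) = Ideal.Quotient.mk cokerIdeal (X 1) := by simp [F0]
      rw [h1, F2'_Q, h2]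
    · show F2' (G0 (X 2)) = Ideal.Quotient.mk cokerIdeal (X 2)
      have h1 : G0 (X 2) = Q (X 3) := by simp [G0]
      have h2 : F0 (X 3 : A4) = Ideal.Quotient.mk cokerIdeal (X 2) := by simp [F0]
      rw [h1, F2'_Q, h2]
  · refine Ideal.Quotient.algHom_ext _ (Ideal.Quotient.algHom_ext _ ?_)
    refine MvPolynomial.algHom_ext fun i => ?_
    simp only [AlgHom.comp_apply, Ideal.Quotient.mkₐ_eq_mk, AlgHom.id_apply]
    have hQ : ∀ p : A4, ((Ideal.Quotient.mk (Ideal.span {h₀}))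
        ((Ideal.Quotient.mk A1Ideal) p)) = Q p := fun p => rfl
    rw [hQ, F2'_Q]
    fin_cases i
    · show G1 (F0 (X 0)) = Q (X 0)
      have h1 : F0 (X 0 : A4) = 0 := by simp [F0]
      rw [h1, map_zero, Q_X0]
    · show G1 (F0 (X 1)) = Q (X 1)
      have h1 : F0 (X 1 : A4) = Ideal.Quotient.mk cokerIdeal (X 0) := by simp [F0]
      have h3 : G0 (X 0 : MvPolynomial (Fin 3) F2) = Q (X 1) := by simp [G0]
      rw [h1, G1_mk, h3]
    · show G1 (F0 (X 2)) = Q (X 2)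
      have h1 : F0 (X 2 : A4) = Ideal.Quotient.mk cokerIdeal (X 1) := by simp [F0]
      have h3 : G0 (X 1 : MvPolynomial (Fin 3) F2) = Q (X 2) := by simp [G0]
      rw [h1, G1_mk, h3]
    · show G1 (F0 (X 3)) = Q (X 3)
      have h1 : F0 (X 3 : A4) = Ideal.Quotient.mk cokerIdeal (X 2) := by simp [F0]
      have h3 : G0 (X 2 : MvPolynomial (Fin 3) F2) = Q (X 3) := by simp [G0]
      rw [h1, G1_mk, h3]

end BX

/-- Identification of the Burklund–Xu `E₂`-page for ℂ-motivic `A(2)` in Chow degree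
one: over `R = F₂[h₀,h₁,a,P]/(h₀h₁, h₁³, h₁a, a² + Ph₀²)`,
(i) `coker(h₀) ≅ F₂[h₁,a,P]/(h₁³, h₁a, a²)`;
(ii) `ker(h₀)/im(h₁) = 0`, i.e. every `h₀`-torsion element is a multiple of `h₁`;
(iii) `ker(h₁) = h₀·F₂[h₀,P] ⊕ h₁²·F₂[P] ⊕ a·F₂[h₀,P]`. -/
theorem burklund_xu_E2_for_A2_chow_degree_one :
    Nonempty
      ((A1Cohomology ⧸ Ideal.span {h₀}) ≃ₐ[ZMod 2]
        (MvPolynomial (Fin 3) (ZMod 2) ⧸ cokerIdeal)) ∧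
    (∀ x : A1Cohomology, h₀ * x = 0 → ∃ y : A1Cohomology, x = h₁ * y) ∧
    (∀ x : A1Cohomology,
      h₁ * x = 0 ↔
        ∃ (f g : MvPolynomial (Fin 2) (ZMod 2)) (u : Polynomial (ZMod 2)),
          x = h₀ * (MvPolynomial.aeval ![h₀, PElem] f)
            + h₁ ^ 2 * (Polynomial.aeval PElem u)
            + aElem * (MvPolynomial.aeval ![h₀, PElem] g)) := by
  exact ⟨⟨BX.partI⟩, BX.part2, BX.part3⟩
end
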